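/- Let G be a finite group, P ≤ G a subgroup, and A ⊆ G a finite set. Suppose that for every g ∉ P and every x ∈ G one has r_{PgP}(x) ≤ 2|P|/q (where r_{PgP}(x) counts pairs (p₁,p₂) ∈ P×P with p₁gp₂ = x, and q ≥ 1 is a real parameter). Then for any g ∉ P, with A_g := A ∩ gP, one has E(P, A_g) ≤ 2|P|²|A_g|/q, where E(P,A_g) = Σ_x r_{PA_g}(x)². -/

import Mathlib

theorem energy_with_coset_bound {G : Type*} [Group G] [Fintype G] [DecidableEq G]
    (P : Subgroup G) [DecidablePred (· ∈ P)] (A : Finset G) (q : ℝ) (hq : 1 ≤ q)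
    (Pf : Finset G) (hPf : Pf = Finset.univ.filter (· ∈ P))
    (hfib : ∀ g : G, g ∉ P → ∀ x : G,
      (((Pf ×ˢ Pf).filter (fun pr => pr.1 * g * pr.2 = x)).card : ℝ) ≤
        2 * Pf.card / q) :
    ∀ g : G, g ∉ P →
      ((∑ x : G, (((Pf ×ˢ (A.filter (fun a => g⁻¹ * a ∈ P))).filter
          (fun pr => pr.1 * pr.2 = x)).card) ^ 2 : ℝ)) ≤
        2 * Pf.card ^ 2 * (A.filter (fun a => g⁻¹ * a ∈ P)).card / q := by
  intro g hg
  set Ag := A.filter (fun a => g⁻¹ * a ∈ P) with hAg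
  have hq0 : (0:ℝ) < q := lt_of_lt_of_le one_pos hq
  set f : G → ℕ := fun x => ((Pf ×ˢ Ag).filter (fun pr => pr.1 * pr.2 = x)).card with hf
  have hbound : ∀ x : G, (f x : ℝ) ≤ 2 * Pf.card / q := by
    intro x
    refine le_trans ?_ (hfib g hg x)
    have hcard : f x ≤ ((Pf ×ˢ Pf).filter (fun pr => pr.1 * g * pr.2 = x)).card := by
      apply Finset.card_le_card_of_injOn (fun pr => (pr.1, g⁻¹ * pr.2))
      · intro pr hpr
        simp only [Finset.mem_coe, Finset.mem_filter, Finset.mem_product, hPf, hAg, Finset.mem_univ,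
          true_and] at hpr ⊢
        obtain ⟨⟨h1, _, h2⟩, h3⟩ := hpr
        refine ⟨⟨h1, h2⟩, ?_⟩
        rw [← h3]; group
      · intro a _ b _ h
        simp only [Prod.mk.injEq] at h
        exact Prod.ext h.1 (mul_left_cancel h.2)
    exact_mod_cast hcard
  have hsum : ∑ x : G, f x = Pf.card * Ag.card := by
    rw [← Finset.card_product]
    exact (Finset.card_eq_sum_card_fiberwise (s := Pf ×ˢ Ag)
      (t := (Finset.univ : Finset G)) (f := fun pr : G × G => pr.1 * pr.2)
      (fun x _ => Finset.mem_univ _)).symm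
  calc (∑ x : G, ((f x : ℝ)) ^ 2) ≤ ∑ x : G, (2 * Pf.card / q) * (f x : ℝ) := by
        apply Finset.sum_le_sum
        intro x _
        rw [sq]
        exact mul_le_mul_of_nonneg_right (hbound x) (Nat.cast_nonneg _)
    _ = (2 * Pf.card / q) * (Pf.card * Ag.card) := by
        rw [← Finset.mul_sum]
        congr 1
        rw [← Nat.cast_sum, hsum]; push_cast; ring
    _ = 2 * Pf.card ^ 2 * Ag.card / q := by ring
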